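/- If s ∈ S(t) for some s, t ∈ V, then t ∈ T(u) and s ∈ S(v); that is, every affected pair has its source among the affected sources of v and its target among the affected targets of u. -/

import Mathlib

set_option linter.unusedSectionVars false


open scoped BigOperators

/-- A directed graph on vertex set `V` with positive real edge weights. -/
structure WDigraph (V : Type*) where
  /-- the edge relation -/
  E : V → V → Prop
  /-- the edge weights -/
  w : V → V → ℝ
  /-- weights of edges are positive -/
  pos : ∀ a b, E a b → 0 < w a b

namespace WDigraph

variable {V : Type*} [Fintype V] [DecidableEq V]

/-- `p` is a simple path from `s` to `t` in `G`: a nonempty list of pairwise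
distinct vertices starting at `s`, ending at `t`, consecutive vertices joined
by edges. (Since all weights are positive, every shortest path is simple, so
it suffices to consider simple paths throughout.) -/
def IsPath (G : WDigraph V) (s t : V) (p : List V) : Prop :=
  List.Chain' G.E p ∧ p.head? = some s ∧ p.getLast? = some t ∧ p.Nodup

/-- The total weight of a list of vertices (sum of the weights of consecutive pairs). -/
def pw (G : WDigraph V) : List V → ℝ
  | [] => 0
  | [_] => 0
  | a :: b :: r => G.w a b + G.pw (b :: r)

/-- `d(s,t)`: shortest-path distance from `s` to `t`, equal to `⊤` (infinity)
if `t` is unreachable from `s`. -/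
noncomputable def dist (G : WDigraph V) (s t : V) : EReal :=
  sInf ((fun p => (G.pw p : EReal)) '' {p | G.IsPath s t p})

/-- The set of shortest `s`-`t` paths in `G`. -/
def SP (G : WDigraph V) (s t : V) : Set (List V) :=
  {p | G.IsPath s t p ∧ (G.pw p : EReal) = G.dist s t}

/-- `σ_{st}`: the number of shortest `s`-`t` paths in `G`. -/
noncomputable def sigma (G : WDigraph V) (s t : V) : ℕ :=
  (G.SP s t).ncard

/-- `σ_{st}(v)`: the number of shortest `s`-`t` paths in `G` that contain `v`. -/
noncomputable def sigmaV (G : WDigraph V) (s t v : V) : ℕ :=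
  {p ∈ G.SP s t | v ∈ p}.ncard

/-- `σ_{st}(v,w)`: the number of shortest `s`-`t` paths in `G` using the edge `(v,w)`. -/
noncomputable def sigmaE (G : WDigraph V) (s t v w : V) : ℕ :=
  {p ∈ G.SP s t | [v, w] <:+: p}.ncard

/-- `P_s(t)`: the set of predecessors of `t` with respect to source `s`:
nodes `y` with `(y,t) ∈ E` and `d(s,y) + ω(y,t) = d(s,t) < ∞`. -/
def pred (G : WDigraph V) (s t : V) : Set V :=
  {y | G.E y t ∧ G.dist s y + (G.w y t : EReal) = G.dist s t ∧ G.dist s t < ⊤}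

/-- `δ_{s•}(v)`: Brandes's one-sided dependency of `s` on `v`
(a summand is `0` whenever its denominator is `0`, which is automatic since
in Lean division by zero yields zero). -/
noncomputable def delta (G : WDigraph V) (s v : V) : ℝ :=
  ∑ᶠ t ∈ {t : V | t ≠ s ∧ t ≠ v}, (G.sigmaV s t v : ℝ) / (G.sigma s t : ℝ)

/-- `c_B(v)`: the betweenness centrality of `v`. -/
noncomputable def bc (G : WDigraph V) (v : V) : ℝ :=
  ∑ᶠ s ∈ {s : V | s ≠ v}, G.delta s v

/-- `G'` is obtained from `G` by the incremental update `(u, v, ω'(u,v))`: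
either a new edge `(u,v) ∉ E` is inserted with positive weight, or the weight
of the existing edge `(u,v)` is decreased; all other edges and weights are
unchanged. (Positivity of all weights is part of the `WDigraph` structure.) -/
structure IsUpdate (G G' : WDigraph V) (u v : V) : Prop where
  /-- the updated edge is present in `G'` -/
  edge' : G'.E u v
  /-- `E' = E ∪ {(u,v)}` -/
  edge_iff : ∀ a b, G'.E a b ↔ G.E a b ∨ a = u ∧ b = v
  /-- `ω'` agrees with `ω` on all edges other than `(u,v)` -/
  weight_eq : ∀ a b, ¬(a = u ∧ b = v) → G'.w a b = G.w a b
  /-- either an insertion of a new edge, or a weight decrease of an existing one -/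
  insert_or_decrease : ¬ G.E u v ∨ (G.E u v ∧ G'.w u v < G.w u v)

/-- `S(t)`: the affected sources of `t`. -/
def affS (G G' : WDigraph V) (t : V) : Set V :=
  {s | G.dist s t > G'.dist s t ∨ G.sigma s t ≠ G'.sigma s t}

/-- `T(s)`: the affected targets of `s`. -/
def affT (G G' : WDigraph V) (s : V) : Set V :=
  {t | G.dist s t > G'.dist s t ∨ G.sigma s t ≠ G'.sigma s t}

/-- `Δ_{s•}(v) = Σ_{t ∈ T(s), t ≠ v} σ_{st}(v)/σ_{st}`, computed in `G`
(`0`-convention for zero denominators). -/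
noncomputable def Delta (G G' : WDigraph V) (s v : V) : ℝ :=
  ∑ᶠ t ∈ {t : V | t ∈ affT G G' s ∧ t ≠ v}, (G.sigmaV s t v : ℝ) / (G.sigma s t : ℝ)

/-- `Δ'_{s•}(v) = Σ_{t ∈ T(s), t ≠ v} σ'_{st}(v)/σ'_{st}`, computed in `G'`
(`0`-convention for zero denominators). -/
noncomputable def Delta' (G G' : WDigraph V) (s v : V) : ℝ :=
  ∑ᶠ t ∈ {t : V | t ∈ affT G G' s ∧ t ≠ v}, (G'.sigmaV s t v : ℝ) / (G'.sigma s t : ℝ)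


/-! ### Auxiliary lemmas -/

@[simp] lemma pw_nil (G : WDigraph V) : G.pw ([] : List V) = 0 := rfl
@[simp] lemma pw_singleton (G : WDigraph V) (a : V) : G.pw [a] = 0 := rfl
@[simp] lemma pw_cons_cons (G : WDigraph V) (a b : V) (r : List V) :
    G.pw (a :: b :: r) = G.w a b + G.pw (b :: r) := rfl

lemma pw_nonneg (G : WDigraph V) : ∀ {p : List V}, List.Chain' G.E p → 0 ≤ G.pw p := by
  intro p
  induction p with
  | nil => intro _; simp
  | cons a q ih =>
    intro hp
    cases q with
    | nil => simp
    | cons b r =>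
      unfold List.Chain' at hp
      rw [List.isChain_cons_cons] at hp
      have h1 := G.pos a b hp.1
      have h2 := ih hp.2
      simp only [pw_cons_cons]
      linarith

lemma pw_append (G : WDigraph V) : ∀ (x : List V) (c : V) (y : List V),
    G.pw (x ++ c :: y) = G.pw (x ++ [c]) + G.pw (c :: y)
  | [], c, y => by simp
  | [a], c, y => by simp [pw_cons_cons]
  | a :: b :: x, c, y => by
    show G.pw (a :: b :: (x ++ c :: y)) = G.pw (a :: b :: (x ++ [c])) + G.pw (c :: y)
    simp only [pw_cons_cons]
    have := G.pw_append (b :: x) c y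
    simp only [List.cons_append] at this
    linarith

lemma isPath_finite (G : WDigraph V) (s t : V) : {p : List V | G.IsPath s t p}.Finite := by
  apply (List.finite_length_le V (Fintype.card V)).subset
  intro p hp
  exact hp.2.2.2.length_le_card

lemma SP_finite (G : WDigraph V) (s t : V) : (G.SP s t).Finite :=
  (G.isPath_finite s t).subset (fun _ hp => hp.1)

lemma dist_le_pw (G : WDigraph V) {s t : V} {p : List V} (hp : G.IsPath s t p) :
    G.dist s t ≤ (G.pw p : EReal) :=
  sInf_le ⟨p, hp, rfl⟩

lemma exists_SP (G : WDigraph V) {s t : V} (h : G.dist s t < ⊤) : ∃ p, p ∈ G.SP s t := by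
  by_cases hne : {p : List V | G.IsPath s t p}.Nonempty
  · have himg : ((fun p => (G.pw p : EReal)) '' {p | G.IsPath s t p}).Nonempty := hne.image _
    have hfin := (G.isPath_finite s t).image (fun p => (G.pw p : EReal))
    obtain ⟨p, hp, hpw⟩ := himg.csInf_mem hfin
    exact ⟨p, hp, hpw⟩
  · exfalso
    rw [Set.not_nonempty_iff_eq_empty] at hne
    rw [dist, hne, Set.image_empty, sInf_empty] at h
    exact lt_irrefl _ h

lemma exists_dup_split {l : List V} (h : ¬ l.Nodup) :
    ∃ (c : V) (x y z : List V), l = x ++ c :: (y ++ c :: z) := by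
  induction l with
  | nil => exact absurd List.nodup_nil h
  | cons a t ih =>
    rw [List.nodup_cons] at h
    push_neg at h
    by_cases ha : a ∈ t
    · obtain ⟨y, z, rfl⟩ := List.append_of_mem ha
      exact ⟨a, [], y, z, rfl⟩
    · obtain ⟨c, x, y, z, rfl⟩ := ih (h ha)
      exact ⟨c, a :: x, y, z, rfl⟩

lemma dist_le_pw_walk_aux (G : WDigraph V) :
    ∀ (n : ℕ) (p : List V) (s t : V), p.length ≤ n → List.Chain' G.E p →
      p.head? = some s → p.getLast? = some t → G.dist s t ≤ (G.pw p : EReal) := by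
  intro n
  induction n with
  | zero =>
    intro p s t hn _ hh _
    rw [Nat.le_zero, List.length_eq_zero_iff] at hn
    subst hn
    simp at hh
  | succ n ih =>
    intro p s t hn hc hh hl
    by_cases hnd : p.Nodup
    · exact G.dist_le_pw ⟨hc, hh, hl, hnd⟩
    · obtain ⟨c, x, y, z, rfl⟩ := exists_dup_split hnd
      have hc' := List.isChain_append.mp hc
      have hq_chain : List.Chain' G.E (x ++ c :: z) := by
        unfold List.Chain'
        rw [List.isChain_append]
        refine ⟨hc'.1, hc.infix ⟨x ++ c :: y, [], by simp⟩, ?_⟩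
        intro a ha b hb
        simp only [List.head?_cons, Option.mem_def, Option.some.injEq] at hb
        subst hb
        exact hc'.2.2 a ha c (by simp)
      have hh' : (x ++ c :: z).head? = some s := by
        rw [List.head?_append] at hh ⊢
        simpa using hh
      have hcz : (c :: z).getLast?.isSome := by
        cases hcc : (c :: z).getLast? with
        | none => exact absurd hcc (by simp [List.getLast?_eq_getLast])
        | some _ => rfl
      have hl' : (x ++ c :: z).getLast? = some t := by
        rw [show x ++ c :: (y ++ c :: z) = (x ++ c :: y) ++ c :: z by simp] at hl
        rw [List.getLast?_append, Option.or_of_isSome hcz] at hl ⊢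
        exact hl
      have hpw : G.pw (x ++ c :: z) ≤ G.pw (x ++ c :: (y ++ c :: z)) := by
        have e1 : G.pw (x ++ c :: (y ++ c :: z)) = G.pw (x ++ [c]) + G.pw (c :: (y ++ c :: z)) :=
          G.pw_append x c (y ++ c :: z)
        have e2 : G.pw (c :: (y ++ c :: z)) = G.pw ((c :: y) ++ c :: z) := by simp
        have e3 : G.pw ((c :: y) ++ c :: z) = G.pw ((c :: y) ++ [c]) + G.pw (c :: z) :=
          G.pw_append (c :: y) c z
        have e4 : G.pw (x ++ c :: z) = G.pw (x ++ [c]) + G.pw (c :: z) := G.pw_append x c z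
        have h0 : 0 ≤ G.pw ((c :: y) ++ [c]) :=
          G.pw_nonneg (hc.infix ⟨x, z, by simp⟩)
        rw [e4]
        calc G.pw (x ++ [c]) + G.pw (c :: z)
            ≤ G.pw (x ++ [c]) + (G.pw ((c :: y) ++ [c]) + G.pw (c :: z)) := by linarith
          _ = G.pw (x ++ c :: (y ++ c :: z)) := by rw [e1, e2, e3]
      have hlen : (x ++ c :: z).length ≤ n := by
        have := hn
        simp only [List.length_append, List.length_cons] at this ⊢
        omega
      calc G.dist s t ≤ (G.pw (x ++ c :: z) : EReal) := ih _ s t hlen hq_chain hh' hl'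
        _ ≤ (G.pw (x ++ c :: (y ++ c :: z)) : EReal) := EReal.coe_le_coe_iff.mpr hpw

lemma dist_le_pw_walk (G : WDigraph V) {p : List V} {s t : V} (hc : List.Chain' G.E p)
    (hh : p.head? = some s) (hl : p.getLast? = some t) :
    G.dist s t ≤ (G.pw p : EReal) :=
  G.dist_le_pw_walk_aux p.length p s t le_rfl hc hh hl

lemma pair_infix_cons {u v a : V} {l : List V} :
    [u, v] <:+: a :: l ↔ (∃ r, a = u ∧ l = v :: r) ∨ [u, v] <:+: l := by
  constructor
  · rintro ⟨x, y, hxy⟩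
    cases x with
    | nil =>
      simp only [List.nil_append, List.cons_append] at hxy
      injection hxy with h1 h2
      exact Or.inl ⟨y, h1.symm, h2.symm⟩
    | cons d x' =>
      simp only [List.cons_append] at hxy
      injection hxy with h1 h2
      exact Or.inr ⟨x', y, h2⟩
  · rintro (⟨r, rfl, rfl⟩ | hi)
    · exact ⟨[], r, rfl⟩
    · obtain ⟨x, y, rfl⟩ := hi
      exact ⟨a :: x, y, rfl⟩

section UpdateLemmas

variable {G G' : WDigraph V} {u v : V}

lemma IsUpdate.w'_le (h : IsUpdate G G' u v) {a b : V} (hab : G.E a b) :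
    G'.w a b ≤ G.w a b := by
  by_cases hc : a = u ∧ b = v
  · obtain ⟨rfl, rfl⟩ := hc
    rcases h.insert_or_decrease with h' | h'
    · exact absurd hab h'
    · exact h'.2.le
  · exact (h.weight_eq a b hc).le

lemma IsUpdate.chain_mono (h : IsUpdate G G' u v) {p : List V} (hp : List.Chain' G.E p) :
    List.Chain' G'.E p :=
  hp.imp (fun a b hab => (h.edge_iff a b).mpr (Or.inl hab))

lemma IsUpdate.path_mono (h : IsUpdate G G' u v) {s t : V} {p : List V}
    (hp : G.IsPath s t p) : G'.IsPath s t p :=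
  ⟨h.chain_mono hp.1, hp.2.1, hp.2.2.1, hp.2.2.2⟩

lemma IsUpdate.pw'_le (h : IsUpdate G G' u v) : ∀ {p : List V}, List.Chain' G.E p →
    G'.pw p ≤ G.pw p := by
  intro p
  induction p with
  | nil => intro _; simp
  | cons a q ih =>
    intro hp
    cases q with
    | nil => simp
    | cons b r =>
      unfold List.Chain' at hp
      rw [List.isChain_cons_cons] at hp
      have h1 := h.w'_le hp.1
      have h2 := ih hp.2
      simp only [pw_cons_cons]
      linarith

lemma IsUpdate.dist'_le (h : IsUpdate G G' u v) (s t : V) : G'.dist s t ≤ G.dist s t := by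
  rw [show G.dist s t = sInf ((fun p => (G.pw p : EReal)) '' {p | G.IsPath s t p}) from rfl]
  apply le_sInf
  rintro x ⟨p, hp, rfl⟩
  calc G'.dist s t ≤ (G'.pw p : EReal) := G'.dist_le_pw (h.path_mono hp)
    _ ≤ (G.pw p : EReal) := EReal.coe_le_coe_iff.mpr (h.pw'_le hp.1)

lemma IsUpdate.pw_eq_of_not_infix (h : IsUpdate G G' u v) :
    ∀ {p : List V}, ¬ [u, v] <:+: p → G'.pw p = G.pw p := by
  intro p
  induction p with
  | nil => intro _; simp
  | cons a q ih =>
    intro hn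
    cases q with
    | nil => simp
    | cons b r =>
      rw [pair_infix_cons] at hn
      push_neg at hn
      have h1 : ¬ (a = u ∧ b = v) := by
        rintro ⟨rfl, rfl⟩
        exact hn.1 r rfl rfl
      have h2 := ih hn.2
      simp only [pw_cons_cons]
      rw [h.weight_eq a b h1, h2]

lemma IsUpdate.chain_of_not_infix (h : IsUpdate G G' u v) :
    ∀ {p : List V}, List.Chain' G'.E p → ¬ [u, v] <:+: p → List.Chain' G.E p := by
  intro p
  induction p with
  | nil => intro _ _; exact List.isChain_nil
  | cons a q ih =>
    intro hp hn
    cases q with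
    | nil => exact List.isChain_singleton a
    | cons b r =>
      rw [pair_infix_cons] at hn
      push_neg at hn
      have h1 : ¬ (a = u ∧ b = v) := by
        rintro ⟨rfl, rfl⟩
        exact hn.1 r rfl rfl
      unfold List.Chain' at hp ⊢
      rw [List.isChain_cons_cons] at hp ⊢
      exact ⟨((h.edge_iff a b).mp hp.1).resolve_right h1, ih hp.2 hn.2⟩

lemma IsUpdate.pw'_lt_of_infix (h : IsUpdate G G' u v) :
    ∀ {p : List V}, List.Chain' G.E p → [u, v] <:+: p → G'.pw p < G.pw p := by
  intro p
  induction p with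
  | nil =>
    intro _ hi
    have := hi.sublist.length_le
    simp at this
  | cons a q ih =>
    intro hp hi
    cases q with
    | nil =>
      have := hi.sublist.length_le
      simp at this
    | cons b r =>
      unfold List.Chain' at hp
      rw [List.isChain_cons_cons] at hp
      rw [pair_infix_cons] at hi
      rcases hi with ⟨r', ha, heq⟩ | hi
      · injection heq with hb hr
        have hEuv : G.E a b := hp.1
        have hlt : G'.w a b < G.w a b := by
          rw [ha, hb]
          rcases h.insert_or_decrease with h' | h'
          · exact absurd (by rw [← ha, ← hb]; exact hEuv) h'
          · exact h'.2
        have h2 := h.pw'_le hp.2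
        simp only [pw_cons_cons]
        linarith
      · have h1 := h.w'_le hp.1
        have h2 := ih hp.2 hi
        simp only [pw_cons_cons]
        linarith

lemma IsUpdate.affected_of_witness (h : IsUpdate G G' u v) {a b : V} {q : List V}
    (hq : q ∈ G'.SP a b) (hi : [u, v] <:+: q) :
    G.dist a b > G'.dist a b ∨ G.sigma a b ≠ G'.sigma a b := by
  by_contra hcon
  push_neg at hcon
  obtain ⟨hd, hsig⟩ := hcon
  have hdist : G.dist a b = G'.dist a b := le_antisymm hd (h.dist'_le a b)
  have hsub : G.SP a b ⊆ G'.SP a b := by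
    intro p hp
    have hpath := hp.1
    have hpw : (G.pw p : EReal) = G.dist a b := hp.2
    have hpath' : G'.IsPath a b p := h.path_mono hpath
    have hni : ¬ [u, v] <:+: p := by
      intro hi'
      have hlt := h.pw'_lt_of_infix hpath.1 hi'
      have hle : G'.dist a b ≤ (G'.pw p : EReal) := G'.dist_le_pw hpath'
      have hle2 : (G.pw p : EReal) ≤ (G'.pw p : EReal) := by rw [hpw, hdist]; exact hle
      exact absurd (lt_of_le_of_lt hle2 (EReal.coe_lt_coe_iff.mpr hlt)) (lt_irrefl _)
    refine ⟨hpath', ?_⟩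
    rw [h.pw_eq_of_not_infix hni, hpw, hdist]
  have heq : G.SP a b = G'.SP a b :=
    Set.eq_of_subset_of_ncard_le hsub (le_of_eq hsig.symm) (G'.SP_finite a b)
  have hq2 : q ∈ G.SP a b := heq ▸ hq
  have hchainG : List.Chain' G.E q := hq2.1.1
  have hlt := h.pw'_lt_of_infix hchainG hi
  have h1 : (G.pw q : EReal) = G.dist a b := hq2.2
  have h2 : (G'.pw q : EReal) = G'.dist a b := hq.2
  have : (G.pw q : EReal) = (G'.pw q : EReal) := by rw [h1, h2, hdist]
  rw [EReal.coe_eq_coe_iff] at this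
  linarith

lemma IsUpdate.exists_witness (h : IsUpdate G G' u v) {a b : V}
    (ha : G.dist a b > G'.dist a b ∨ G.sigma a b ≠ G'.sigma a b) :
    ∃ q ∈ G'.SP a b, [u, v] <:+: q := by
  by_contra hcon
  push_neg at hcon
  have hd : G.dist a b = G'.dist a b := by
    refine le_antisymm ?_ (h.dist'_le a b)
    by_cases htop : G'.dist a b = ⊤
    · rw [htop]; exact le_top
    · obtain ⟨p, hp⟩ := G'.exists_SP (lt_top_iff_ne_top.mpr htop)
      have hni := hcon p hp
      have hpathG : G.IsPath a b p :=
        ⟨h.chain_of_not_infix hp.1.1 hni, hp.1.2.1, hp.1.2.2.1, hp.1.2.2.2⟩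
      calc G.dist a b ≤ (G.pw p : EReal) := G.dist_le_pw hpathG
        _ = (G'.pw p : EReal) := by rw [h.pw_eq_of_not_infix hni]
        _ = G'.dist a b := hp.2
  have hsub' : G'.SP a b ⊆ G.SP a b := by
    intro p hp
    have hni := hcon p hp
    refine ⟨⟨h.chain_of_not_infix hp.1.1 hni, hp.1.2.1, hp.1.2.2.1, hp.1.2.2.2⟩, ?_⟩
    rw [← h.pw_eq_of_not_infix hni, hp.2, hd]
  have hsub : G.SP a b ⊆ G'.SP a b := by
    intro p hp
    have hni : ¬ [u, v] <:+: p := by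
      intro hi
      have hlt := h.pw'_lt_of_infix hp.1.1 hi
      have hle : G'.dist a b ≤ (G'.pw p : EReal) := G'.dist_le_pw (h.path_mono hp.1)
      have hle2 : (G.pw p : EReal) ≤ (G'.pw p : EReal) := by rw [hp.2, hd]; exact hle
      exact absurd (lt_of_le_of_lt hle2 (EReal.coe_lt_coe_iff.mpr hlt)) (lt_irrefl _)
    exact ⟨h.path_mono hp.1, by rw [h.pw_eq_of_not_infix hni, hp.2, hd]⟩
  have heq : G.SP a b = G'.SP a b := Set.Subset.antisymm hsub hsub'
  rcases ha with ha | ha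
  · exact ne_of_gt ha hd
  · exact ha (by rw [sigma, sigma, heq])

lemma IsUpdate.split (h : IsUpdate G G' u v) {s t : V} {a b : List V}
    (hp : (a ++ u :: v :: b) ∈ G'.SP s t) :
    (u :: v :: b) ∈ G'.SP u t ∧ (a ++ [u, v]) ∈ G'.SP s v := by
  have hpath := hp.1
  have hchain := hpath.1
  have hhead : (a ++ u :: v :: b).head? = some s := hpath.2.1
  have hlast : (a ++ u :: v :: b).getLast? = some t := hpath.2.2.1
  have hnd : (a ++ u :: v :: b).Nodup := hpath.2.2.2
  have hpw : (G'.pw (a ++ u :: v :: b) : EReal) = G'.dist s t := hp.2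
  -- weight decomposition: pw p = pw (a ++ [u]) + pw (u :: v :: b)
  have hdecomp : G'.pw (a ++ u :: v :: b) = G'.pw (a ++ [u]) + G'.pw (u :: v :: b) :=
    G'.pw_append a u (v :: b)
  -- the suffix q = u :: v :: b
  have hvb_some : (v :: b).getLast?.isSome := by
    cases hcc : (v :: b).getLast? with
    | none => exact absurd hcc (by simp [List.getLast?_eq_getLast])
    | some _ => rfl
  have huvb_some : (u :: v :: b).getLast?.isSome := by
    cases hcc : (u :: v :: b).getLast? with
    | none => exact absurd hcc (by simp [List.getLast?_eq_getLast])
    | some _ => rfl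
  have hqlast : (u :: v :: b).getLast? = some t := by
    rw [List.getLast?_append, Option.or_of_isSome huvb_some] at hlast
    exact hlast
  have hqchain : List.Chain' G'.E (u :: v :: b) := hchain.infix ⟨a, [], by simp⟩
  have hqnd : (u :: v :: b).Nodup :=
    (List.sublist_append_right a (u :: v :: b)).nodup hnd
  have hqpath : G'.IsPath u t (u :: v :: b) := ⟨hqchain, rfl, hqlast, hqnd⟩
  -- the prefix r = a ++ [u, v]
  have hrchain : List.Chain' G'.E (a ++ [u, v]) := hchain.infix ⟨[], b, by simp⟩
  have hrhead : (a ++ [u, v]).head? = some s := by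
    rw [List.head?_append] at hhead ⊢
    simpa using hhead
  have hrlast : (a ++ [u, v]).getLast? = some v := by
    rw [List.getLast?_append]
    rfl
  have hrnd : (a ++ [u, v]).Nodup := by
    have hsub : List.Sublist (a ++ [u, v]) (a ++ u :: v :: b) := by
      rw [show a ++ u :: v :: b = (a ++ [u, v]) ++ b by simp]
      exact List.sublist_append_left _ _
    exact hsub.nodup hnd
  have hrpath : G'.IsPath s v (a ++ [u, v]) := ⟨hrchain, hrhead, hrlast, hrnd⟩
  -- chain' facts about a and links
  have hc' := List.isChain_append.mp hchain
  -- now show optimality of the suffix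
  have hqSP : (u :: v :: b) ∈ G'.SP u t := by
    refine ⟨hqpath, ?_⟩
    by_contra hne
    have hlt : G'.dist u t < (G'.pw (u :: v :: b) : EReal) :=
      lt_of_le_of_ne (G'.dist_le_pw hqpath) (fun hh => hne hh.symm)
    obtain ⟨q', hq'⟩ := G'.exists_SP (lt_trans hlt (EReal.coe_lt_top _))
    -- q' is a shortest u-t path in G'
    have hq'head : q'.head? = some u := hq'.1.2.1
    obtain ⟨q'', rfl⟩ : ∃ q'', q' = u :: q'' := by
      cases q' with
      | nil => simp at hq'head
      | cons c q'' =>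
        simp only [List.head?_cons, Option.some.injEq] at hq'head
        exact ⟨q'', by rw [hq'head]⟩
    have hq'pwlt : G'.pw (u :: q'') < G'.pw (u :: v :: b) := by
      have h1 : (G'.pw (u :: q'') : EReal) = G'.dist u t := hq'.2
      have := h1 ▸ hlt
      exact EReal.coe_lt_coe_iff.mp this
    -- build the walk a ++ u :: q''
    have hwchain : List.Chain' G'.E (a ++ u :: q'') := by
      unfold List.Chain'
      rw [List.isChain_append]
      refine ⟨hc'.1, hq'.1.1, ?_⟩
      intro x hx y hy
      simp only [List.head?_cons, Option.mem_def, Option.some.injEq] at hy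
      subst hy
      exact hc'.2.2 x hx u (by simp)
    have hwhead : (a ++ u :: q'').head? = some s := by
      rw [List.head?_append] at hhead ⊢
      simpa using hhead
    have hwlast : (a ++ u :: q'').getLast? = some t := by
      have huq_some : (u :: q'').getLast?.isSome := by
        cases hcc : (u :: q'').getLast? with
        | none => exact absurd hcc (by simp [List.getLast?_eq_getLast])
        | some _ => rfl
      rw [List.getLast?_append, Option.or_of_isSome huq_some]
      exact hq'.1.2.2.1
    have hwpw : G'.pw (a ++ u :: q'') = G'.pw (a ++ [u]) + G'.pw (u :: q'') :=
      G'.pw_append a u q''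
    have hwalk := G'.dist_le_pw_walk hwchain hwhead hwlast
    have : (G'.pw (a ++ u :: q'') : EReal) < (G'.pw (a ++ u :: v :: b) : EReal) := by
      rw [EReal.coe_lt_coe_iff, hwpw, hdecomp]
      linarith
    rw [hpw] at this
    exact absurd (lt_of_le_of_lt hwalk this) (lt_irrefl _)
  -- optimality of the prefix
  have hrSP : (a ++ [u, v]) ∈ G'.SP s v := by
    refine ⟨hrpath, ?_⟩
    by_contra hne
    have hlt : G'.dist s v < (G'.pw (a ++ [u, v]) : EReal) :=
      lt_of_le_of_ne (G'.dist_le_pw hrpath) (fun hh => hne hh.symm)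
    obtain ⟨r', hr'⟩ := G'.exists_SP (lt_trans hlt (EReal.coe_lt_top _))
    have hr'last : r'.getLast? = some v := hr'.1.2.2.1
    obtain ⟨r'', rfl⟩ : ∃ r'', r' = r'' ++ [v] := by
      rcases List.eq_nil_or_concat r' with rfl | ⟨l', c, rfl⟩
      · simp at hr'last
      · rw [List.concat_eq_append] at hr'last ⊢
        rw [List.getLast?_concat] at hr'last
        injection hr'last with hc
        exact ⟨l', by rw [hc]⟩
    have hr'pwlt : G'.pw (r'' ++ [v]) < G'.pw (a ++ [u, v]) := by
      have h1 : (G'.pw (r'' ++ [v]) : EReal) = G'.dist s v := hr'.2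
      have := h1 ▸ hlt
      exact EReal.coe_lt_coe_iff.mp this
    -- build the walk r'' ++ v :: b
    have hr'c := List.isChain_append.mp hr'.1.1
    have hvbchain : List.Chain' G'.E (v :: b) := hchain.infix ⟨a ++ [u], [], by simp⟩
    have hwchain : List.Chain' G'.E (r'' ++ v :: b) := by
      unfold List.Chain'
      rw [List.isChain_append]
      refine ⟨hr'c.1, hvbchain, ?_⟩
      intro x hx y hy
      simp only [List.head?_cons, Option.mem_def, Option.some.injEq] at hy
      subst hy
      exact hr'c.2.2 x hx v (by simp)
    have hwhead : (r'' ++ v :: b).head? = some s := by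
      have := hr'.1.2.1
      rw [List.head?_append] at this ⊢
      simpa using this
    have hwlast : (r'' ++ v :: b).getLast? = some t := by
      rw [show a ++ u :: v :: b = (a ++ [u]) ++ v :: b by simp] at hlast
      rw [List.getLast?_append, Option.or_of_isSome hvb_some] at hlast ⊢
      exact hlast
    have hwpw : G'.pw (r'' ++ v :: b) = G'.pw (r'' ++ [v]) + G'.pw (v :: b) :=
      G'.pw_append r'' v b
    have hdecomp2 : G'.pw (a ++ u :: v :: b) = G'.pw (a ++ [u, v]) + G'.pw (v :: b) := by
      have e1 : G'.pw ((a ++ [u]) ++ v :: b) = G'.pw ((a ++ [u]) ++ [v]) + G'.pw (v :: b) :=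
        G'.pw_append (a ++ [u]) v b
      rw [show a ++ u :: v :: b = (a ++ [u]) ++ v :: b by simp,
        show a ++ [u, v] = (a ++ [u]) ++ [v] by simp]
      exact e1
    have hwalk := G'.dist_le_pw_walk hwchain hwhead hwlast
    have : (G'.pw (r'' ++ v :: b) : EReal) < (G'.pw (a ++ u :: v :: b) : EReal) := by
      rw [EReal.coe_lt_coe_iff, hwpw, hdecomp2]
      linarith
    rw [hpw] at this
    exact absurd (lt_of_le_of_lt hwalk this) (lt_irrefl _)
  exact ⟨hqSP, hrSP⟩

end UpdateLemmas

/-- If `s ∈ S(t)` for some `s, t ∈ V`, then `t ∈ T(u)` and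
`s ∈ S(v)`: every affected pair has its source among the affected sources of `v`
and its target among the affected targets of `u`. -/
theorem affected_pair_mem (G G' : WDigraph V) (u v : V)
    (h : IsUpdate G G' u v) (s t : V) (hs : s ∈ affS G G' t) :
    t ∈ affT G G' u ∧ s ∈ affS G G' v := by
  obtain ⟨q, hq, hi⟩ := h.exists_witness hs
  obtain ⟨x, y, hxy⟩ := hi
  have hq' : (x ++ u :: v :: y) ∈ G'.SP s t := by
    rw [show x ++ u :: v :: y = q from by rw [← hxy]; simp]
    exact hq
  obtain ⟨h1, h2⟩ := h.split hq'
  constructor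
  · exact h.affected_of_witness h1 ⟨[], y, rfl⟩
  · exact h.affected_of_witness h2 ⟨x, [], by simp⟩

end WDigraph
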